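/- Let μ be a probability measure on ℝ^d and ψ : ℝ^d → ℝ ∪ {+∞} a convex function differentiable μ-almost everywhere, such that ∇ψ pushes μ forward to ν, where both μ and ν are absolutely continuous with respect to Lebesgue measure. Let ψ* be the Legendre-Fenchel dual of ψ, and let R := ∇ψ*, Q := ∇ψ. Then R(Q(u)) = u for μ-almost every u, and R pushes ν forward to μ. -/
import Mathlib


open scoped RealInnerProductSpace
open MeasureTheory Filter

noncomputable section

abbrev E (d : ℕ) : Type := EuclideanSpace ℝ (Fin d)

/-- Subdifferential of an `EReal`-valued function at a point. -/
def subdiffE {d : ℕ} (f : E d → EReal) (x : E d) : Set (E d) :=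
  {ξ | ∀ y : E d, f x + ((⟪ξ, y - x⟫ : ℝ) : EReal) ≤ f y}

/-- Legendre–Fenchel dual (convex conjugate) of an `EReal`-valued function. -/
def econj {d : ℕ} (f : E d → EReal) (y : E d) : EReal :=
  ⨆ x : E d, ((⟪x, y⟫ : ℝ) : EReal) - f x

/-- Convexity of an `EReal`-valued function. -/
def ConvexE {d : ℕ} (f : E d → EReal) : Prop :=
  ∀ x y : E d, ∀ a b : ℝ, 0 ≤ a → 0 ≤ b → a + b = 1 →
    f (a • x + b • y) ≤ (a : EReal) * f x + (b : EReal) * f y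

lemma mem_subdiff_conj {d : ℕ} (ψ : E d → EReal) (hbot : ∀ x, ψ x ≠ ⊥) {u ξ : E d}
    (h : ξ ∈ subdiffE ψ u) : u ∈ subdiffE (econj ψ) ξ := by
  rcases eq_or_ne (ψ u) ⊤ with htop | htop
  · -- ψ ≡ ⊤, so econj ψ ξ = ⊥
    have hall : ∀ x, ψ x = ⊤ := by
      intro x
      have hx := h x
      rw [htop] at hx
      simp at hx
      exact hx
    have hbotconj : econj ψ ξ = ⊥ := by
      simp [econj, hall]
    intro y
    simp [hbotconj]
  · obtain ⟨c, hc⟩ : ∃ c : ℝ, ψ u = (c : EReal) := by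
      lift ψ u to ℝ using ⟨htop, hbot u⟩ with c
      exact ⟨c, rfl⟩
    -- econj ψ ξ = ⟪u,ξ⟫ - c
    have hle : econj ψ ξ ≤ ((⟪u, ξ⟫ - c : ℝ) : EReal) := by
      apply iSup_le
      intro x
      have hx := h x
      rw [hc] at hx
      rcases eq_or_ne (ψ x) ⊤ with hx' | hx'
      · rw [hx']
        simp
      · obtain ⟨r, hr⟩ : ∃ r : ℝ, ψ x = (r : EReal) := by
          lift ψ x to ℝ using ⟨hx', hbot x⟩ with r
          exact ⟨r, rfl⟩
        rw [hr] at hx ⊢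
        have hx2 : c + ⟪ξ, x - u⟫ ≤ r := by exact_mod_cast hx
        have e1 : ⟪ξ, x - u⟫ = ⟪ξ, x⟫ - ⟪ξ, u⟫ := inner_sub_right ξ x u
        have e2 : ⟪ξ, x⟫ = ⟪x, ξ⟫ := real_inner_comm x ξ
        have e3 : ⟪ξ, u⟫ = ⟪u, ξ⟫ := real_inner_comm u ξ
        rw [e1, e2, e3] at hx2
        have hx3 : ⟪x, ξ⟫ - r ≤ ⟪u, ξ⟫ - c := by linarith
        exact_mod_cast hx3
    have hge : ((⟪u, ξ⟫ - c : ℝ) : EReal) ≤ econj ψ ξ := by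
      have := le_iSup (fun x : E d => ((⟪x, ξ⟫ : ℝ) : EReal) - ψ x) u
      rw [hc, ← EReal.coe_sub] at this
      exact this
    have heq : econj ψ ξ = ((⟪u, ξ⟫ - c : ℝ) : EReal) := le_antisymm hle hge
    intro y
    rw [heq]
    have hconjy : ((⟪u, y⟫ - c : ℝ) : EReal) ≤ econj ψ y := by
      have := le_iSup (fun x : E d => ((⟪x, y⟫ : ℝ) : EReal) - ψ x) u
      rw [hc, ← EReal.coe_sub] at this
      exact this
    refine le_trans (le_of_eq ?_) hconjy
    rw [← EReal.coe_add]
    congr 1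
    have : ⟪u, y - ξ⟫ = ⟪u, y⟫ - ⟪u, ξ⟫ := inner_sub_right u y ξ
    rw [this]; ring

/-- If `ψ` is convex, μ-a.e. differentiable with gradient (quantile map) `Q`
pushing `μ` forward to `ν` (both absolutely continuous), and `R` is the a.e. gradient of the
dual `ψ*` (the rank map), then `R ∘ Q = id` μ-a.e. and `R` pushes `ν` forward to `μ`. -/
theorem statement7 {d : ℕ} (μ ν : Measure (E d))
    [IsProbabilityMeasure μ] [IsProbabilityMeasure ν]
    (hμ : μ ≪ (volume : Measure (E d))) (hν : ν ≪ (volume : Measure (E d)))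
    (ψ : E d → EReal) (hbot : ∀ x, ψ x ≠ ⊥) (hconv : ConvexE ψ)
    (Q R : E d → E d) (hQm : Measurable Q) (hRm : Measurable R)
    (hQ : ∀ᵐ u ∂μ, subdiffE ψ u = {Q u})
    (hR : ∀ᵐ y ∂(volume : Measure (E d)), subdiffE (econj ψ) y = {R y})
    (hpush : Measure.map Q μ = ν) :
    (∀ᵐ u ∂μ, R (Q u) = u) ∧ Measure.map R ν = μ := by
  have hRν : ∀ᵐ y ∂ν, subdiffE (econj ψ) y = {R y} := hν.ae_le hR
  have hRμ : ∀ᵐ u ∂μ, subdiffE (econj ψ) (Q u) = {R (Q u)} := by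
    rw [← hpush] at hRν
    exact (MeasureTheory.Measure.tendsto_ae_map hQm.aemeasurable).eventually hRν
  have h1 : ∀ᵐ u ∂μ, R (Q u) = u := by
    filter_upwards [hQ, hRμ] with u hQu hRu
    have hmem : Q u ∈ subdiffE ψ u := by rw [hQu]; rfl
    have := mem_subdiff_conj ψ hbot hmem
    rw [hRu] at this
    exact this.symm
  refine ⟨h1, ?_⟩
  rw [← hpush, MeasureTheory.Measure.map_map hRm hQm]
  have hid : (R ∘ Q) =ᵐ[μ] id := h1
  rw [MeasureTheory.Measure.map_congr hid, MeasureTheory.Measure.map_id]
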